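/- Suppose all non-faulty processes propose the same value v in round 0, the faulty set F has |F| ≤ t, and n > 3t. Then no t + 1 distinct processes sent ¬v in round 0, so ¬v is not valid at round 1, and inductively ¬v is not valid (and not decided) in any round r ≥ 1; hence only v can be decided. -/
import Mathlib


/-- BBC-Validity: if all non-faulty processes propose the same value v, then ¬v is never
valid and never gathers a deciding quorum in any round r ≥ 1. -/
theorem unanimous_validity {α : Type*} [DecidableEq α] (P F : Finset α) (n t : ℕ)
    (sent : ℕ → α → Bool → Prop) (valid : ℕ → Bool → Prop) (v : Bool)
    (hn : P.card = n) (ht : 3 * t < n)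
    (hF : F ⊆ P) (hFcard : F.card ≤ t)
    -- all non-faulty processes propose v (and only v) in round 0
    (hprop : ∀ p ∈ P, p ∉ F → sent 0 p v ∧ ∀ w : Bool, sent 0 p w → w = v)
    -- validity at round 1 requires t + 1 round-0 senders
    (h1 : ∀ w : Bool, valid 1 w ↔ ∃ T ⊆ P, t + 1 ≤ T.card ∧ ∀ p ∈ T, sent 0 p w)
    -- validity rules for rounds r ≥ 2
    (hrv : ∀ r : ℕ, 2 ≤ r → ∀ w : Bool,
      (w = decide ((r - 1) % 2 = 1) →
        (valid r w ↔ ((r = 2 ∧ ∃ T ⊆ P, t + 1 ≤ T.card ∧ ∀ p ∈ T, sent 0 p w) ∨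
          (∃ S ⊆ P, n - t ≤ S.card ∧ ∀ p ∈ S, sent (r - 2) p w)))) ∧
      (w ≠ decide ((r - 1) % 2 = 1) →
        (valid r w ↔ ∃ S ⊆ P, n - t ≤ S.card ∧ ∀ p ∈ S, sent (r - 1) p w)))
    -- non-faulty processes send only valid values in rounds r ≥ 1
    (hbcast : ∀ r : ℕ, 1 ≤ r → ∀ p ∈ P, p ∉ F → ∀ w : Bool, sent r p w → valid r w) :
    (¬ ∃ T ⊆ P, t + 1 ≤ T.card ∧ ∀ p ∈ T, sent 0 p (!v)) ∧
    (∀ r : ℕ, 1 ≤ r → ¬ valid r (!v)) ∧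
    (∀ r : ℕ, 1 ≤ r → ¬ ∃ S ⊆ P, n - t ≤ S.card ∧ ∀ p ∈ S, sent r p (!v)) := by
  -- Part A: no t+1 round-0 senders of !v
  have hA : ¬ ∃ T ⊆ P, t + 1 ≤ T.card ∧ ∀ p ∈ T, sent 0 p (!v) := by
    rintro ⟨T, hTP, hTc, hTs⟩
    have hTF : T ⊆ F := by
      intro p hp
      by_contra hpF
      have := (hprop p (hTP hp) hpF).2 (!v) (hTs p hp)
      simp at this
    have := Finset.card_le_card hTF
    omega
  -- extracting a nonfaulty process from a quorum
  have hext : ∀ S : Finset α, S ⊆ P → n - t ≤ S.card → ∃ p ∈ S, p ∈ P ∧ p ∉ F := by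
    intro S hSP hSc
    have h1 : S.card ≤ (S \ F).card + F.card := Finset.card_le_card_sdiff_add_card
    have h2 : 0 < (S \ F).card := by omega
    obtain ⟨p, hp⟩ := Finset.card_pos.mp h2
    rcases Finset.mem_sdiff.mp hp with ⟨hpS, hpF⟩
    exact ⟨p, hpS, hSP hpS, hpF⟩
  -- no round-0 quorum of !v
  have hQ0 : ¬ ∃ S ⊆ P, n - t ≤ S.card ∧ ∀ p ∈ S, sent 0 p (!v) := by
    rintro ⟨S, hSP, hSc, hSs⟩
    obtain ⟨p, hpS, hpP, hpF⟩ := hext S hSP hSc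
    have := (hprop p hpP hpF).2 (!v) (hSs p hpS)
    simp at this
  -- main induction: ¬ valid r !v for all r ≥ 1
  have hV : ∀ r : ℕ, 1 ≤ r → ¬ valid r (!v) := by
    intro r
    induction r using Nat.strong_induction_on with
    | _ r ih =>
      intro hr hval
      -- quorum at round s < r (s ≥ 1) is impossible
      have hQ : ∀ s : ℕ, s < r →
          ¬ ∃ S ⊆ P, n - t ≤ S.card ∧ ∀ p ∈ S, sent s p (!v) := by
        rintro s hs ⟨S, hSP, hSc, hSs⟩
        rcases Nat.eq_zero_or_pos s with h0 | h1
        · exact hQ0 ⟨S, hSP, by rw [← h0]; exact ⟨hSc, hSs⟩⟩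
        · obtain ⟨p, hpS, hpP, hpF⟩ := hext S hSP hSc
          exact ih s hs h1 (hbcast s h1 p hpP hpF (!v) (hSs p hpS))
      rcases Nat.lt_or_ge r 2 with h2 | h2
      · -- r = 1
        have : r = 1 := by omega
        subst this
        exact hA ((h1 (!v)).mp hval)
      · have := hrv r h2 (!v)
        by_cases hd : (!v) = decide ((r - 1) % 2 = 1)
        · rcases (this.1 hd).mp hval with ⟨_, hT⟩ | hS
          · exact hA hT
          · exact hQ (r - 2) (by omega) hS
        · exact hQ (r - 1) (by omega) ((this.2 hd).mp hval)
  refine ⟨hA, hV, ?_⟩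
  rintro r hr ⟨S, hSP, hSc, hSs⟩
  obtain ⟨p, hpS, hpP, hpF⟩ := hext S hSP hSc
  exact hV r hr (hbcast r hr p hpP hpF (!v) (hSs p hpS))
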